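/- (Neyman orthogonality of the GEC estimator with respect to the dual multiplier.) Let I ⊆ ℝ be an open interval and f : I → ℝ differentiable, and let g be differentiable on f(I) with g(f(ν)) = ν for all ν ∈ I (so f′(ν) g′(f(ν)) = 1 with g′(f(ν)) ≠ 0). Fix N ∈ ℕ and for i = 1,…,N let δ_i ∈ {0,1}, q_i > 0, y_i ∈ ℝ and z_i ∈ ℝ^d, and fix γ ∈ ℝ^d. Define θ : ℝ^d → ℝ by θ(λ) = N^{-1} [ Σ_{i=1}^N δ_i f(q_i λᵀ z_i) y_i + ( Σ_{i=1}^N z_i − Σ_{i=1}^N δ_i f(q_i λᵀ z_i) z_i )ᵀ γ ]. Suppose λ̂ ∈ ℝ^d satisfies q_i λ̂ᵀ z_i ∈ I for all i with δ_i = 1, set ω̂_i = f(q_i λ̂ᵀ z_i), and suppose γ solves the weighted normal equations Σ_{i=1}^N δ_i q_i ( g′(ω̂_i) )^{-1} ( y_i − z_iᵀ γ ) z_i = 0. Then θ is differentiable at λ̂ and its gradient there is zero: ∇θ(λ̂) = 0. -/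

import Mathlib

open Matrix Finset


private lemma sum_dotProduct_aux {n ι : Type*} [Fintype n] (s : Finset ι)
    (w : ι → n → ℝ) (v : n → ℝ) : (∑ i ∈ s, w i) ⬝ᵥ v = ∑ i ∈ s, w i ⬝ᵥ v := by
  simp only [dotProduct, Finset.sum_apply, Finset.sum_mul]
  exact Finset.sum_comm

private lemma dotProduct_sum_aux {n ι : Type*} [Fintype n] (s : Finset ι)
    (v : n → ℝ) (w : ι → n → ℝ) : v ⬝ᵥ (∑ i ∈ s, w i) = ∑ i ∈ s, v ⬝ᵥ w i := by
  simp only [dotProduct, Finset.sum_apply, Finset.mul_sum]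
  exact Finset.sum_comm

/-- Neyman orthogonality of the GEC estimator with respect to the dual
multiplier: if `γ` solves the weighted normal equations, the augmented
GEC functional `θ(λ)` is differentiable at `λ̂` with zero gradient. -/
theorem stmt_11 (N d : ℕ) (I : Set ℝ) (hIopen : IsOpen I) (hIconn : I.OrdConnected)
    (f f' g g' : ℝ → ℝ)
    (hf : ∀ ν ∈ I, HasDerivAt f (f' ν) ν)
    (hg : ∀ ν ∈ I, HasDerivAt g (g' (f ν)) (f ν))
    (hinv : ∀ ν ∈ I, g (f ν) = ν)
    (hne : ∀ ν ∈ I, g' (f ν) ≠ 0)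
    (δ q y : Fin N → ℝ) (hδ : ∀ i, δ i = 0 ∨ δ i = 1) (hq : ∀ i, 0 < q i)
    (z : Fin N → Fin d → ℝ) (γ : Fin d → ℝ)
    (θ : (Fin d → ℝ) → ℝ)
    (hθ : ∀ lam : Fin d → ℝ, θ lam = (N : ℝ)⁻¹ *
      ((∑ i, δ i * f (q i * (lam ⬝ᵥ z i)) * y i) +
       ((∑ i, z i) - ∑ i, (δ i * f (q i * (lam ⬝ᵥ z i))) • z i) ⬝ᵥ γ))
    (lamhat : Fin d → ℝ)
    (hmem : ∀ i, δ i = 1 → q i * (lamhat ⬝ᵥ z i) ∈ I)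
    (ωhat : Fin N → ℝ) (hωhat : ∀ i, ωhat i = f (q i * (lamhat ⬝ᵥ z i)))
    (hnormal : ∑ i, (δ i * q i * (g' (ωhat i))⁻¹ * (y i - z i ⬝ᵥ γ)) • z i
      = (0 : Fin d → ℝ)) :
    HasFDerivAt θ (0 : (Fin d → ℝ) →L[ℝ] ℝ) lamhat := by
  classical
  -- abbreviations
  set ν : Fin N → ℝ := fun i => q i * (lamhat ⬝ᵥ z i) with hνdef
  -- key derivative identity: f' (ν i) = (g' (ωhat i))⁻¹ when δ i = 1
  have key : ∀ i, δ i = 1 → f' (ν i) = (g' (ωhat i))⁻¹ := by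
    intro i hi
    have hmemi := hmem i hi
    have h1 : HasDerivAt (g ∘ f) (g' (f (ν i)) * f' (ν i)) (ν i) :=
      (hg _ hmemi).comp _ (hf _ hmemi)
    have heq : (g ∘ f) =ᶠ[nhds (ν i)] id := by
      filter_upwards [hIopen.mem_nhds hmemi] with x hx
      exact hinv x hx
    have h3 : HasDerivAt id (g' (f (ν i)) * f' (ν i)) (ν i) :=
      h1.congr_of_eventuallyEq heq.symm
    have hone : g' (f (ν i)) * f' (ν i) = 1 := h3.unique (hasDerivAt_id _)
    rw [hωhat]
    exact eq_inv_of_mul_eq_one_left (by rw [mul_comm]; exact hone)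
  -- continuous linear maps v ↦ v ⬝ᵥ z i
  set Lz : Fin N → ((Fin d → ℝ) →L[ℝ] ℝ) := fun i =>
    ∑ j, z i j • (ContinuousLinearMap.proj j : (Fin d → ℝ) →L[ℝ] ℝ) with hLzdef
  have hLz : ∀ i (v : Fin d → ℝ), Lz i v = v ⬝ᵥ z i := by
    intro i v
    simp [hLzdef, dotProduct, ContinuousLinearMap.sum_apply, mul_comm]
  -- derivative of each summand
  set D : Fin N → ((Fin d → ℝ) →L[ℝ] ℝ) := fun i =>
    (δ i * f' (ν i) * q i * (y i - z i ⬝ᵥ γ)) • Lz i with hDdef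
  have hterm : ∀ i, HasFDerivAt
      (fun lam : Fin d → ℝ => δ i * f (q i * (lam ⬝ᵥ z i)) * (y i - z i ⬝ᵥ γ))
      (D i) lamhat := by
    intro i
    rcases hδ i with hi | hi
    · have hfun : (fun lam : Fin d → ℝ =>
          δ i * f (q i * (lam ⬝ᵥ z i)) * (y i - z i ⬝ᵥ γ)) = fun _ => (0 : ℝ) := by
        funext lam; rw [hi]; ring
      have hD0 : D i = 0 := by
        rw [hDdef]; simp [hi]
      rw [hfun, hD0]
      exact hasFDerivAt_const 0 lamhat
    · have h0 : HasFDerivAt (fun lam : Fin d → ℝ => lam ⬝ᵥ z i) (Lz i) lamhat := by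
        have := (Lz i).hasFDerivAt (x := lamhat)
        convert this using 1
        funext v
        exact (hLz i v).symm
      have h1 : HasFDerivAt (fun lam : Fin d → ℝ => q i * (lam ⬝ᵥ z i))
          (q i • Lz i) lamhat := h0.const_mul (q i)
      have h2 : HasFDerivAt (fun lam : Fin d → ℝ => f (q i * (lam ⬝ᵥ z i)))
          (f' (ν i) • (q i • Lz i)) lamhat :=
        (hf _ (hmem i hi)).comp_hasFDerivAt lamhat h1
      have h3 := (h2.const_mul (δ i)).mul_const (y i - z i ⬝ᵥ γ)
      refine h3.congr_fderiv ?_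
      rw [hDdef]
      ext v
      simp
      ring
  -- derivative of the whole sum form
  set F : (Fin d → ℝ) → ℝ := fun lam => (N : ℝ)⁻¹ *
      ((∑ i, δ i * f (q i * (lam ⬝ᵥ z i)) * (y i - z i ⬝ᵥ γ)) + ∑ i, z i ⬝ᵥ γ)
    with hFdef
  have hF : HasFDerivAt F ((N : ℝ)⁻¹ • ∑ i, D i) lamhat := by
    have hsum : HasFDerivAt
        (fun lam : Fin d → ℝ =>
          ∑ i, δ i * f (q i * (lam ⬝ᵥ z i)) * (y i - z i ⬝ᵥ γ))
        (∑ i, D i) lamhat := HasFDerivAt.fun_sum (fun i _ => hterm i)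
    exact (hsum.add_const _).const_mul _
  -- θ = F
  have hθF : θ = F := by
    funext lam
    rw [hθ, hFdef]
    simp only [sub_dotProduct, sum_dotProduct_aux, smul_dotProduct, smul_eq_mul]
    have h : ∑ i, δ i * f (q i * (lam ⬝ᵥ z i)) * (y i - z i ⬝ᵥ γ)
        = (∑ i, δ i * f (q i * (lam ⬝ᵥ z i)) * y i)
          - ∑ i, δ i * f (q i * (lam ⬝ᵥ z i)) * (z i ⬝ᵥ γ) := by
      rw [← Finset.sum_sub_distrib]
      exact Finset.sum_congr rfl fun i _ => by ring
    rw [h]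
    ring
  -- the derivative is zero
  have hzero : ((N : ℝ)⁻¹ • ∑ i, D i) = (0 : (Fin d → ℝ) →L[ℝ] ℝ) := by
    ext v
    have hDv : ∀ i, D i v =
        (δ i * q i * (g' (ωhat i))⁻¹ * (y i - z i ⬝ᵥ γ)) * (v ⬝ᵥ z i) := by
      intro i
      rcases hδ i with hi | hi
      · rw [hDdef]; simp [hi]
      · rw [hDdef]
        simp only [ContinuousLinearMap.coe_smul', Pi.smul_apply, smul_eq_mul, hLz]
        rw [key i hi]
        ring
    have hsum : ∑ i, D i v = v ⬝ᵥ ∑ i, (δ i * q i * (g' (ωhat i))⁻¹ * (y i - z i ⬝ᵥ γ)) • z i := by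
      rw [dotProduct_sum_aux]
      refine Finset.sum_congr rfl fun i _ => ?_
      rw [hDv i, dotProduct_smul, smul_eq_mul]
    simp only [ContinuousLinearMap.coe_smul', Pi.smul_apply, ContinuousLinearMap.sum_apply,
      smul_eq_mul, ContinuousLinearMap.zero_apply]
    rw [hsum, hnormal, dotProduct_zero, mul_zero]
  rw [hθF, ← hzero]
  exact hF
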